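/- Let Ω ⊆ ℝ^N be a bounded open set and let Ω' ⊆ ℝ^N be an open set containing the closure of Ω. Let u : ℝ^N → ℝ be measurable and suppose that: (i) ∫_{Ω'} |u(x)|^p dx < ∞ and ∬_{Ω'×Ω'} |u(x)−u(y)|^p / |x−y|^{N+ps} dx dy < ∞; (ii) ∫_{ℝ^N} |u(x)|^{p−1} / (1+|x|)^{N+ps} dx < ∞; (iii) u = 0 almost everywhere on ℝ^N ∖ Ω. Then ∫_{ℝ^N} |u(x)|^p dx < ∞ and [u]_{s,p}^p = ∬_{ℝ^N×ℝ^N} |u(x)−u(y)|^p / |x−y|^{N+ps} dx dy < ∞. -/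

import Mathlib

open MeasureTheory Set Filter

private lemma kernel_pointwise {δ k t : ℝ} (hδ : 0 < δ) (hk : 0 ≤ k) (ht : δ ≤ t)
    {a : ℝ} (ha : 0 ≤ a) :
    a / t ^ k ≤ ((1 + δ) / δ) ^ k * a * (1 + t) ^ (-k) := by
  have ht0 : 0 < t := hδ.trans_le ht
  have h1t : 0 < 1 + t := by linarith
  have hle : (1 + t) ^ k ≤ ((1 + δ) / δ) ^ k * t ^ k := by
    rw [← Real.mul_rpow (by positivity) ht0.le]
    apply Real.rpow_le_rpow h1t.le _ hk
    rw [div_mul_eq_mul_div, le_div_iff₀ hδ]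
    nlinarith
  have h2 : (t ^ k)⁻¹ ≤ ((1 + δ) / δ) ^ k * ((1 + t) ^ k)⁻¹ := by
    rw [← one_div, ← div_eq_mul_inv, div_le_div_iff₀ (by positivity) (by positivity)]
    linarith
  rw [Real.rpow_neg h1t.le, div_eq_mul_inv, mul_assoc, mul_comm a]
  exact mul_le_mul_of_nonneg_right h2 ha |>.trans_eq (by ring)

private lemma inner_bound {N : ℕ} {k δ : ℝ} (hk0 : 0 ≤ k) (hδ : 0 < δ)
    {T : Set (EuclideanSpace ℝ (Fin N))} {x : EuclideanSpace ℝ (Fin N)}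
    (hdist : ∀ y ∈ T, δ ≤ ‖x - y‖) {A : ℝ} (hA : 0 ≤ A) :
    ∫⁻ y in T, ENNReal.ofReal (A / ‖x - y‖ ^ k) ≤
      ENNReal.ofReal (((1 + δ) / δ) ^ k * A) *
        ∫⁻ z : EuclideanSpace ℝ (Fin N), ENNReal.ofReal ((1 + ‖z‖) ^ (-k)) := by
  have hmeas : Measurable fun y : EuclideanSpace ℝ (Fin N) =>
      ENNReal.ofReal (((1 + δ) / δ) ^ k * A) *
        ENNReal.ofReal ((1 + ‖x - y‖) ^ (-k)) := by fun_prop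
  calc ∫⁻ y in T, ENNReal.ofReal (A / ‖x - y‖ ^ k)
      ≤ ∫⁻ y in T, ENNReal.ofReal (((1 + δ) / δ) ^ k * A) *
          ENNReal.ofReal ((1 + ‖x - y‖) ^ (-k)) := by
        apply setLIntegral_mono hmeas
        intro y hy
        rw [← ENNReal.ofReal_mul (by positivity)]
        exact ENNReal.ofReal_le_ofReal
          ((kernel_pointwise hδ hk0 (hdist y hy) hA).trans_eq (by ring))
    _ ≤ ∫⁻ y, ENNReal.ofReal (((1 + δ) / δ) ^ k * A) *
          ENNReal.ofReal ((1 + ‖x - y‖) ^ (-k)) := setLIntegral_le_lintegral _ _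
    _ = ENNReal.ofReal (((1 + δ) / δ) ^ k * A) *
          ∫⁻ y, ENNReal.ofReal ((1 + ‖x - y‖) ^ (-k)) :=
        lintegral_const_mul _ (by fun_prop)
    _ = ENNReal.ofReal (((1 + δ) / δ) ^ k * A) *
          ∫⁻ z : EuclideanSpace ℝ (Fin N), ENNReal.ofReal ((1 + ‖z‖) ^ (-k)) := by
        congr 1
        have : ∀ y : EuclideanSpace ℝ (Fin N),
            ENNReal.ofReal ((1 + ‖x - y‖) ^ (-k)) =
              (fun z : EuclideanSpace ℝ (Fin N) =>
                ENNReal.ofReal ((1 + ‖z‖) ^ (-k))) (y - x) := by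
          intro y; simp [norm_sub_rev x y]
        simp_rw [this]
        exact lintegral_sub_right_eq_self
          (fun z : EuclideanSpace ℝ (Fin N) => ENNReal.ofReal ((1 + ‖z‖) ^ (-k))) x

theorem statement0 {N : ℕ} (hN : 1 ≤ N) {p s : ℝ} (hp : 2 ≤ p)
    (hs : s ∈ Set.Ioo (0 : ℝ) 1) (hNps : p * s < (N : ℝ))
    (Ω Ω' : Set (EuclideanSpace ℝ (Fin N)))
    (hΩo : IsOpen Ω) (hΩb : Bornology.IsBounded Ω)
    (hΩ'o : IsOpen Ω') (hcl : closure Ω ⊆ Ω')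
    (u : EuclideanSpace ℝ (Fin N) → ℝ) (hu : Measurable u)
    (hLp : ∫⁻ x in Ω', ENNReal.ofReal (|u x| ^ p) < ⊤)
    (hGag : ∫⁻ x in Ω', ∫⁻ y in Ω',
        ENNReal.ofReal (|u x - u y| ^ p / ‖x - y‖ ^ ((N : ℝ) + p * s)) < ⊤)
    (hTail : ∫⁻ x, ENNReal.ofReal (|u x| ^ (p - 1) / (1 + ‖x‖) ^ ((N : ℝ) + p * s)) < ⊤)
    (hzero : ∀ᵐ x, x ∉ Ω → u x = 0) :
    (∫⁻ x, ENNReal.ofReal (|u x| ^ p) < ⊤) ∧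
      (∫⁻ x, ∫⁻ y,
        ENNReal.ofReal (|u x - u y| ^ p / ‖x - y‖ ^ ((N : ℝ) + p * s)) < ⊤) := by
  have hp0 : (0 : ℝ) < p := by linarith
  have hs0 : (0 : ℝ) < s := hs.1
  set k : ℝ := (N : ℝ) + p * s with hkdef
  have hps : 0 < p * s := mul_pos hp0 hs0
  have hkN : (N : ℝ) < k := by rw [hkdef]; linarith
  have hk0 : 0 ≤ k := by positivity
  have hΩm : MeasurableSet Ω := hΩo.measurableSet
  have hΩ'm : MeasurableSet Ω' := hΩ'o.measurableSet
  have hΩsub : Ω ⊆ Ω' := subset_closure.trans hcl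
  -- Part 1
  have hLpΩ : ∫⁻ x in Ω, ENNReal.ofReal (|u x| ^ p) < ⊤ :=
    lt_of_le_of_lt (lintegral_mono_set hΩsub) hLp
  have h1 : ∫⁻ x, ENNReal.ofReal (|u x| ^ p) < ⊤ := by
    rw [← lintegral_add_compl _ hΩm]
    have hzero' : ∫⁻ x in Ωᶜ, ENNReal.ofReal (|u x| ^ p) = 0 := by
      have hae : ∀ᵐ x ∂(volume.restrict Ωᶜ), ENNReal.ofReal (|u x| ^ p) = 0 := by
        filter_upwards [ae_restrict_of_ae hzero, ae_restrict_mem hΩm.compl] with x hx hmem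
        rw [hx hmem]
        simp [Real.zero_rpow hp0.ne']
      rw [lintegral_congr_ae hae, lintegral_zero]
    rw [hzero', add_zero]
    exact hLpΩ
  refine ⟨h1, ?_⟩
  -- Part 2
  obtain ⟨δ, hδ, hthick⟩ :=
    (hΩb.isCompact_closure).exists_thickening_subset_open hΩ'o hcl
  have hdist : ∀ x ∈ Ω, ∀ y ∈ Ω'ᶜ, δ ≤ ‖x - y‖ := by
    intro x hx y hy
    by_contra h
    push_neg at h
    exact hy (hthick (Metric.mem_thickening_iff.2
      ⟨x, subset_closure hx, by rwa [dist_eq_norm, norm_sub_rev]⟩))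
  set I : ENNReal := ∫⁻ z : EuclideanSpace ℝ (Fin N),
    ENNReal.ofReal ((1 + ‖z‖) ^ (-k)) with hIdef
  have hI : I < ⊤ := by
    rw [hIdef]
    exact finite_integral_one_add_norm (by rwa [finrank_euclideanSpace_fin])
  set c : ℝ := ((1 + δ) / δ) ^ k with hcdef
  have hc0 : 0 ≤ c := by positivity
  set F : EuclideanSpace ℝ (Fin N) → EuclideanSpace ℝ (Fin N) → ENNReal := fun x y =>
    ENNReal.ofReal (|u x - u y| ^ p / ‖x - y‖ ^ k) with hFdef
  have hG : Measurable fun z : EuclideanSpace ℝ (Fin N) × EuclideanSpace ℝ (Fin N) =>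
      F z.1 z.2 := by
    rw [hFdef]; fun_prop
  set π : Measure (EuclideanSpace ℝ (Fin N) × EuclideanSpace ℝ (Fin N)) :=
    (volume : Measure (EuclideanSpace ℝ (Fin N))).prod volume with hπdef
  -- a.e. vanishing in the product
  have hzz : ∀ᵐ z ∂π, (z.1 ∉ Ω → u z.1 = 0) ∧ (z.2 ∉ Ω → u z.2 = 0) := by
    rw [ae_iff] at hzero
    obtain ⟨t, hsub, htm, ht0⟩ := exists_measurable_superset_of_null hzero
    have h1' : ∀ᵐ z ∂π, z.1 ∉ Ω → u z.1 = 0 := by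
      rw [ae_iff]
      refine measure_mono_null (fun z hz => ?_) (show π (t ×ˢ univ) = 0 by
        rw [hπdef, Measure.prod_prod, ht0, zero_mul])
      exact ⟨hsub hz, mem_univ _⟩
    have h2' : ∀ᵐ z ∂π, z.2 ∉ Ω → u z.2 = 0 := by
      rw [ae_iff]
      refine measure_mono_null (fun z hz => ?_) (show π (univ ×ˢ t) = 0 by
        rw [hπdef, Measure.prod_prod, ht0, mul_zero])
      exact ⟨mem_univ _, hsub hz⟩
    exact h1'.and h2'
  -- inner bounds
  have hTB : ∀ x ∈ Ω, ∫⁻ y in Ω'ᶜ, F x y ≤ ENNReal.ofReal (c * |u x| ^ p) * I := by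
    intro x hx
    have e : ∫⁻ y in Ω'ᶜ, F x y = ∫⁻ y in Ω'ᶜ,
        ENNReal.ofReal (|u x| ^ p / ‖x - y‖ ^ k) := by
      apply lintegral_congr_ae
      filter_upwards [ae_restrict_of_ae hzero, ae_restrict_mem hΩ'm.compl] with y hy hmem
      simp only [hFdef, hy (fun h => hmem (hΩsub h)), sub_zero]
    rw [e]
    exact inner_bound hk0 hδ (hdist x hx) (by positivity)
  have hTC : ∀ y ∈ Ω, ∫⁻ x in Ω'ᶜ, F x y ≤ ENNReal.ofReal (c * |u y| ^ p) * I := by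
    intro y hy
    have e : ∫⁻ x in Ω'ᶜ, F x y = ∫⁻ x in Ω'ᶜ,
        ENNReal.ofReal (|u y| ^ p / ‖y - x‖ ^ k) := by
      apply lintegral_congr_ae
      filter_upwards [ae_restrict_of_ae hzero, ae_restrict_mem hΩ'm.compl] with x hx hmem
      simp only [hFdef, hx (fun h => hmem (hΩsub h)), zero_sub, abs_neg, norm_sub_rev x y]
    rw [e]
    have hd : ∀ x ∈ Ω'ᶜ, δ ≤ ‖y - x‖ := fun x hx => hdist y hy x hx
    exact inner_bound hk0 hδ hd (by positivity)
  -- rephrase hypotheses in terms of F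
  have hGagF : ∫⁻ x in Ω', ∫⁻ y in Ω', F x y < ⊤ := by
    simpa only [hFdef] using hGag
  -- iterated integrals over product sets
  have eP : (∫⁻ x, ∫⁻ y, F x y) = ∫⁻ z, F z.1 z.2 ∂π := by
    rw [hπdef, lintegral_prod _ hG.aemeasurable]
  have eA : ∫⁻ z in Ω' ×ˢ Ω', F z.1 z.2 ∂π = ∫⁻ x in Ω', ∫⁻ y in Ω', F x y := by
    rw [hπdef, ← Measure.prod_restrict, lintegral_prod _ hG.aemeasurable]
  have eB : ∫⁻ z in Ω ×ˢ Ω'ᶜ, F z.1 z.2 ∂π = ∫⁻ x in Ω, ∫⁻ y in Ω'ᶜ, F x y := by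
    rw [hπdef, ← Measure.prod_restrict, lintegral_prod _ hG.aemeasurable]
  have eC : ∫⁻ z in Ω'ᶜ ×ˢ Ω, F z.1 z.2 ∂π = ∫⁻ y in Ω, ∫⁻ x in Ω'ᶜ, F x y := by
    rw [hπdef, ← Measure.prod_restrict, lintegral_prod_symm _ hG.aemeasurable]
  -- bound on the two off-diagonal pieces
  have hB : ∫⁻ x in Ω, ∫⁻ y in Ω'ᶜ, F x y < ⊤ := by
    have step : ∫⁻ x in Ω, ∫⁻ y in Ω'ᶜ, F x y
        ≤ ∫⁻ x in Ω, (ENNReal.ofReal c * I) * ENNReal.ofReal (|u x| ^ p) := by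
      apply setLIntegral_mono (by fun_prop)
      intro x hx
      have h := hTB x hx
      rwa [ENNReal.ofReal_mul hc0, mul_right_comm] at h
    rw [lintegral_const_mul _ (by fun_prop)] at step
    refine step.trans_lt ?_
    exact ENNReal.mul_lt_top (ENNReal.mul_lt_top ENNReal.ofReal_lt_top hI) hLpΩ
  have hC : ∫⁻ y in Ω, ∫⁻ x in Ω'ᶜ, F x y < ⊤ := by
    have step : ∫⁻ y in Ω, ∫⁻ x in Ω'ᶜ, F x y
        ≤ ∫⁻ y in Ω, (ENNReal.ofReal c * I) * ENNReal.ofReal (|u y| ^ p) := by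
      apply setLIntegral_mono (by fun_prop)
      intro y hy
      have h := hTC y hy
      rwa [ENNReal.ofReal_mul hc0, mul_right_comm] at h
    rw [lintegral_const_mul _ (by fun_prop)] at step
    refine step.trans_lt ?_
    exact ENNReal.mul_lt_top (ENNReal.mul_lt_top ENNReal.ofReal_lt_top hI) hLpΩ
  -- splitting of the complement of Ω' ×ˢ Ω'
  have hsplit : ∫⁻ z in (Ω' ×ˢ Ω')ᶜ, F z.1 z.2 ∂π ≤
      (∫⁻ z in Ω ×ˢ Ω'ᶜ, F z.1 z.2 ∂π) + ∫⁻ z in Ω'ᶜ ×ˢ Ω, F z.1 z.2 ∂π := by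
    rw [← lintegral_indicator (hΩ'm.prod hΩ'm).compl,
      ← lintegral_indicator (hΩm.prod hΩ'm.compl),
      ← lintegral_indicator (hΩ'm.compl.prod hΩm),
      ← lintegral_add_left (hG.indicator (hΩm.prod hΩ'm.compl))]
    apply lintegral_mono_ae
    filter_upwards [hzz] with z hz
    by_cases hz1 : z ∈ (Ω' ×ˢ Ω')ᶜ
    · rw [Set.indicator_of_mem hz1]
      by_cases hx : z.1 ∈ Ω
      · have hy' : z.2 ∉ Ω' := fun hy2 => hz1 ⟨hΩsub hx, hy2⟩
        rw [Set.indicator_of_mem (show z ∈ Ω ×ˢ Ω'ᶜ from ⟨hx, hy'⟩)]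
        exact le_self_add
      · by_cases hy : z.2 ∈ Ω
        · have hx' : z.1 ∉ Ω' := fun hx2 => hz1 ⟨hx2, hΩsub hy⟩
          rw [Set.indicator_of_mem (show z ∈ Ω'ᶜ ×ˢ Ω from ⟨hx', hy⟩)]
          exact le_add_self
        · have hF0 : F z.1 z.2 = 0 := by
            simp only [hFdef, hz.1 hx, hz.2 hy, sub_zero, abs_zero,
              Real.zero_rpow hp0.ne', zero_div, ENNReal.ofReal_zero]
          rw [hF0]
          exact zero_le
    · rw [Set.indicator_of_notMem hz1]
      exact zero_le
  -- put everything together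
  have h2 : (∫⁻ x, ∫⁻ y, F x y) < ⊤ := by
    rw [eP, ← lintegral_add_compl (fun z => F z.1 z.2) (hΩ'm.prod hΩ'm)]
    apply ENNReal.add_lt_top.2
    constructor
    · rw [eA]; exact hGagF
    · refine hsplit.trans_lt ?_
      apply ENNReal.add_lt_top.2
      exact ⟨eB ▸ hB, eC ▸ hC⟩
  simpa only [hFdef] using h2
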